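/- Two n×n matrices A and B over a field are principal minor equivalent if and only if for every subset S ⊆ [n], the sum of the weights of directed Hamiltonian cycles on vertex set S is the same in the weighted digraphs of A and B; here the weight of a directed cycle C is ∏_{(i,j)∈C} A[i,j], and cycles must have length ≥ 2 or be loops weighted by diagonal entries, with the convention that diagonal entries also must agree (length-1 cycles i→i have weight A[i,i]). -/

import Mathlib

open Matrix

/-- Principal minor equivalence: all corresponding principal minors agree. -/
def PrincipalMinorEquiv {F : Type*} [Field F] {m : Type*} [Fintype m] [DecidableEq m]
    (A B : Matrix m m F) : Prop :=
  ∀ S : Finset m,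
    (A.submatrix (fun i : S => (i : m)) (fun i : S => (i : m))).det =
    (B.submatrix (fun i : S => (i : m)) (fun i : S => (i : m))).det

open Classical in
/-- The sum of the weights of directed Hamiltonian cycles on the vertex set `S`
in the weighted digraph of `A`: a Hamiltonian cycle on `S` (for `|S| ≥ 2`) is a
cyclic permutation of `S` with no fixed points, and for `|S| ≤ 1` the only
"cycle" is the loop, weighted by the diagonal entry. -/
noncomputable def hamCycleSum {n : ℕ} {F : Type*} [Field F]
    (A : Matrix (Fin n) (Fin n) F) (S : Finset (Fin n)) : F :=
  ∑ σ ∈ Finset.univ.filter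
      (fun σ : Equiv.Perm S => (σ.IsCycle ∧ σ.support = Finset.univ) ∨ S.card ≤ 1),
    ∏ i : S, A i (σ i)

namespace PMEAux

open Equiv Equiv.Perm Finset

variable {n : ℕ} {F : Type*} [Field F]

open Classical in
/-- Sum over all permutations with support inside `S` (the principal minor). -/
noncomputable def permSum (A : Matrix (Fin n) (Fin n) F) (S : Finset (Fin n)) : F :=
  ∑ σ ∈ Finset.univ.filter (fun σ : Perm (Fin n) => σ.support ⊆ S),
    ((Perm.sign σ : ℤ) : F) * ∏ i ∈ S, A i (σ i)

open Classical in
theorem permSum_def (A : Matrix (Fin n) (Fin n) F) (S : Finset (Fin n)) :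
    permSum A S =
      ∑ σ ∈ Finset.univ.filter (fun σ : Perm (Fin n) => σ.support ⊆ S),
        ((Perm.sign σ : ℤ) : F) * ∏ i ∈ S, A i (σ i) := rfl

open Classical in
/-- The Hamiltonian-cycle sum, expressed with whole-type permutations. -/
noncomputable def cycSum (A : Matrix (Fin n) (Fin n) F) (S : Finset (Fin n)) : F :=
  if S.card ≤ 1 then ∏ i ∈ S, A i i
  else ∑ σ ∈ Finset.univ.filter (fun σ : Perm (Fin n) => σ.IsCycle ∧ σ.support = S),
    ∏ i ∈ S, A i (σ i)

theorem prod_ofSubtype (A : Matrix (Fin n) (Fin n) F) (S : Finset (Fin n))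
    (σ : Perm S) :
    ∏ i ∈ S, A i (Perm.ofSubtype σ i) = ∏ i : S, A (i : Fin n) ((σ i : Fin n)) := by
  classical
  rw [← Finset.prod_coe_sort S (fun i => A i (Perm.ofSubtype σ i))]
  exact Fintype.prod_congr _ _ fun i => by rw [Perm.ofSubtype_apply_coe]

theorem det_eq_permSum (A : Matrix (Fin n) (Fin n) F) (S : Finset (Fin n)) :
    (A.submatrix (fun i : S => (i : Fin n)) (fun i : S => (i : Fin n))).det = permSum A S := by
  classical
  rw [← Matrix.det_transpose, Matrix.det_apply', permSum_def]
  refine Finset.sum_bij' (fun σ _ => Perm.ofSubtype σ)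
    (fun σ hσ => σ.subtypePerm (isInvariant_of_support_le (Finset.mem_filter.1 hσ).2))
    ?_ ?_ ?_ ?_ ?_
  · intro σ _
    rw [Finset.mem_filter]
    refine ⟨Finset.mem_univ _, ?_⟩
    rw [support_ofSubtype]
    rintro y hy
    rcases Finset.mem_map.1 hy with ⟨b, _, rfl⟩
    exact b.2
  · intro σ hσ; exact Finset.mem_univ _
  · intro σ _; exact subtypePerm_ofSubtype σ
  · intro σ hσ
    exact ofSubtype_subtypePerm _ fun x hx => (Finset.mem_filter.1 hσ).2 (mem_support.2 hx)
  · intro σ _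
    rw [sign_ofSubtype, prod_ofSubtype]
    simp only [Matrix.transpose_apply, Matrix.submatrix_apply]

theorem permSum_empty (A : Matrix (Fin n) (Fin n) F) : permSum A (∅ : Finset (Fin n)) = 1 := by
  classical
  rw [permSum_def]
  have h : (Finset.univ.filter (fun σ : Perm (Fin n) => σ.support ⊆ (∅ : Finset (Fin n))))
      = {1} := by
    ext σ
    simp [Finset.subset_empty, support_eq_empty_iff]
  rw [h, Finset.sum_singleton]
  simp

theorem hamCycleSum_eq_cycSum (A : Matrix (Fin n) (Fin n) F) (S : Finset (Fin n)) :
    hamCycleSum A S = cycSum A S := by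
  classical
  unfold hamCycleSum cycSum
  by_cases h1 : S.card ≤ 1
  · rw [if_pos h1]
    have huniv : (Finset.univ : Finset (Perm S)) = {1} := by
      refine Finset.eq_singleton_iff_unique_mem.2 ⟨Finset.mem_univ _, fun σ _ => ?_⟩
      refine Equiv.ext fun x => ?_
      exact Subtype.ext (Finset.card_le_one.1 h1 _ (σ x).2 _ x.2)
    rw [Finset.filter_true_of_mem (fun σ _ => Or.inr h1), huniv, Finset.sum_singleton]
    simpa using Finset.prod_coe_sort S (fun i => A i i)
  · rw [if_neg h1]
    have hfil : (Finset.univ.filter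
        (fun σ : Perm S => (σ.IsCycle ∧ σ.support = Finset.univ) ∨ S.card ≤ 1))
        = Finset.univ.filter (fun σ : Perm S => σ.IsCycle ∧ σ.support = Finset.univ) := by
      apply Finset.filter_congr
      intro σ _
      simp [h1]
    rw [hfil]
    refine Finset.sum_bij' (fun σ _ => Perm.ofSubtype σ)
      (fun σ hσ => σ.subtypePerm (isInvariant_of_support_le
        (le_of_eq (Finset.mem_filter.1 hσ).2.2)))
      ?_ ?_ ?_ ?_ ?_
    · intro σ hσ
      obtain ⟨-, hcyc, hsup⟩ := Finset.mem_filter.1 hσ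
      rw [Finset.mem_filter]
      refine ⟨Finset.mem_univ _, ?_, ?_⟩
      · exact hcyc.extendDomain (Equiv.refl S)
      · rw [support_ofSubtype]
        have hne : ∀ x : S, σ x ≠ x := fun x =>
          mem_support.1 (hsup ▸ Finset.mem_univ x)
        ext y
        simp only [Finset.mem_map, Function.Embedding.coe_subtype]
        constructor
        · rintro ⟨b, -, rfl⟩; exact b.2
        · intro hy
          exact ⟨⟨y, hy⟩, (@Equiv.Perm.mem_support _ _
            (Subtype.fintype fun x => x ∈ S) σ ⟨y, hy⟩).2 (hne _), rfl⟩
    · intro σ hσ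
      obtain ⟨-, hcyc, hsup⟩ := Finset.mem_filter.1 hσ
      rw [Finset.mem_filter]
      refine ⟨Finset.mem_univ _, ?_, ?_⟩
      · have hco : σ.IsCycleOn (S : Set (Fin n)) := by
          have := hcyc.isCycleOn
          rwa [← coe_support_eq_set_support, hsup] at this
        have hnt : (S : Set (Fin n)).Nontrivial :=
          Finset.one_lt_card_iff_nontrivial.1 (by omega)
        exact hco.isCycle_subtypePerm hnt
      · refine Finset.eq_univ_iff_forall.2 fun x => ?_
        rw [mem_support]
        intro hfix
        have hfix' : σ (x : Fin n) = (x : Fin n) := congrArg Subtype.val hfix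
        have hx : (x : Fin n) ∈ σ.support := hsup ▸ x.2
        exact (mem_support.1 hx) hfix'
    · intro σ _; exact subtypePerm_ofSubtype σ
    · intro σ hσ
      refine ofSubtype_subtypePerm _ fun x hx => ?_
      exact (Finset.mem_filter.1 hσ).2.2 ▸ mem_support.2 hx
    · intro σ _
      exact (prod_ofSubtype A S σ).symm


open Classical in
/-- Permutations with support inside `U`. -/
noncomputable def tauFinset (U : Finset (Fin n)) : Finset (Equiv.Perm (Fin n)) :=
  Finset.univ.filter (fun τ : Perm (Fin n) => τ.support ⊆ U)

open Classical in
theorem mem_tauFinset {U : Finset (Fin n)} {τ : Perm (Fin n)} :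
    τ ∈ tauFinset U ↔ τ.support ⊆ U := by simp [tauFinset]

open Classical in
theorem permSum_def' (A : Matrix (Fin n) (Fin n) F) (S : Finset (Fin n)) :
    permSum A S = ∑ σ ∈ tauFinset S, ((Perm.sign σ : ℤ) : F) * ∏ i ∈ S, A i (σ i) := rfl

open Classical in
/-- Cycles with support exactly `T`, together with the degenerate loop at `x`
when `T = {x}`. -/
noncomputable def cycFinset (x : Fin n) (T : Finset (Fin n)) : Finset (Equiv.Perm (Fin n)) :=
  Finset.univ.filter
    (fun c : Perm (Fin n) => (c.IsCycle ∧ c.support = T) ∨ (c = 1 ∧ T = {x}))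

open Classical in
theorem mem_cycFinset {x : Fin n} {T : Finset (Fin n)} {c : Perm (Fin n)} :
    c ∈ cycFinset x T ↔ (c.IsCycle ∧ c.support = T) ∨ (c = 1 ∧ T = {x}) := by
  simp [cycFinset]

theorem support_subset_of_mem_cycFinset {x : Fin n} {T : Finset (Fin n)} {c : Perm (Fin n)}
    (hc : (c.IsCycle ∧ c.support = T) ∨ (c = 1 ∧ T = {x})) : c.support ⊆ T := by
  rcases hc with ⟨-, rfl⟩ | ⟨rfl, -⟩
  · exact Finset.Subset.refl _
  · simp

theorem coeff_cycSum (A : Matrix (Fin n) (Fin n) F) {x : Fin n} {T : Finset (Fin n)}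
    (hx : x ∈ T) :
    (-1 : F) ^ (T.card - 1) * cycSum A T =
      ∑ c ∈ cycFinset x T, ((Perm.sign c : ℤ) : F) * ∏ i ∈ T, A i (c i) := by
  classical
  by_cases h1 : T.card ≤ 1
  · have hT : T = {x} := (Finset.eq_of_subset_of_card_le
      (Finset.singleton_subset_iff.2 hx) (by simpa using h1)).symm
    subst hT
    have hfil : cycFinset x {x} = {1} := by
      ext c
      rw [mem_cycFinset, Finset.mem_singleton]
      constructor
      · rintro (⟨hc, hs⟩ | ⟨h, -⟩)
        · exfalso
          have h2 := hc.two_le_card_support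
          rw [hs] at h2
          simp at h2
        · exact h
      · rintro rfl; exact Or.inr ⟨rfl, rfl⟩
    rw [hfil, Finset.sum_singleton]
    simp [cycSum]
  · push_neg at h1
    have hTne : ¬(T = {x}) := by rintro rfl; simp at h1
    have hfil : cycFinset x T
        = Finset.univ.filter (fun c : Perm (Fin n) => c.IsCycle ∧ c.support = T) := by
      ext c
      rw [mem_cycFinset, Finset.mem_filter]
      simp [hTne]
    obtain ⟨m, hm⟩ : ∃ m, T.card = m + 1 := ⟨T.card - 1, by omega⟩
    rw [hfil, cycSum, if_neg (by omega), Finset.mul_sum]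
    refine Finset.sum_congr rfl fun c hc => ?_
    obtain ⟨-, hcyc, hs⟩ := Finset.mem_filter.1 hc
    have hsgn : Perm.sign c = -(-1) ^ T.card := by rw [← hs]; exact hcyc.sign
    have hcast : ((Perm.sign c : ℤ) : F) = (-1 : F) ^ (T.card - 1) := by
      rw [hsgn, hm]
      push_cast
      ring
    rw [hcast]

open Classical in
/-- The generic term of the double sum. -/
noncomputable def termG (A : Matrix (Fin n) (Fin n) F) (S T : Finset (Fin n))
    (p : Perm (Fin n) × Perm (Fin n)) : F :=
  (((Perm.sign p.1 : ℤ) : F) * ∏ i ∈ T, A i (p.1 i)) *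
    (((Perm.sign p.2 : ℤ) : F) * ∏ i ∈ S \ T, A i (p.2 i))

theorem permSum_decomp (A : Matrix (Fin n) (Fin n) F) {S : Finset (Fin n)} {x : Fin n}
    (hx : x ∈ S) :
    permSum A S = ∑ T ∈ S.powerset.filter (fun T => x ∈ T),
      (-1 : F) ^ (T.card - 1) * cycSum A T * permSum A (S \ T) := by
  classical
  have step : ∀ T ∈ S.powerset.filter (fun T => x ∈ T),
      (-1 : F) ^ (T.card - 1) * cycSum A T * permSum A (S \ T)
        = ∑ p ∈ cycFinset x T ×ˢ tauFinset (S \ T), termG A S T p := by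
    intro T hT
    have hxT : x ∈ T := (Finset.mem_filter.1 hT).2
    rw [coeff_cycSum A hxT, permSum_def', Finset.sum_mul_sum, Finset.sum_product]
    rfl
  rw [Finset.sum_congr rfl step, Finset.sum_sigma (S.powerset.filter (fun T => x ∈ T))
    (fun T => cycFinset x T ×ˢ tauFinset (S \ T)) (fun q => termG A S q.1 q.2) |>.symm]
  rw [permSum_def']
  refine (Finset.sum_bij' (fun q _ => q.2.1 * q.2.2)
    (fun σ _ => (⟨(σ.cycleOf x).support ∪ {x}, (σ.cycleOf x, (σ.cycleOf x)⁻¹ * σ)⟩ :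
      Σ _ : Finset (Fin n), Perm (Fin n) × Perm (Fin n)))
    ?_ ?_ ?_ ?_ ?_).symm
  -- i q ∈ tauFinset S
  · rintro ⟨T, c, τ⟩ hq
    obtain ⟨hT, hp⟩ := Finset.mem_sigma.1 hq
    obtain ⟨hc, hτ⟩ := Finset.mem_product.1 hp
    have hTS : T ⊆ S := Finset.mem_powerset.1 (Finset.mem_filter.1 hT).1
    have hcT : c.support ⊆ T := support_subset_of_mem_cycFinset (mem_cycFinset.1 hc)
    have hτU : τ.support ⊆ S \ T := mem_tauFinset.1 hτ
    refine mem_tauFinset.2 fun y hy => ?_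
    rcases Finset.mem_union.1 (support_mul_le c τ hy) with h | h
    · exact hTS (hcT h)
    · exact (Finset.mem_sdiff.1 (hτU h)).1
  -- j σ ∈ sigma set
  · intro σ hσ
    have hsS : σ.support ⊆ S := mem_tauFinset.1 hσ
    by_cases hxσ : σ x = x
    · have hc1 : σ.cycleOf x = 1 := (cycleOf_eq_one_iff σ).2 hxσ
      rw [Finset.mem_sigma]
      constructor
      · simp only [hc1, support_one, Finset.empty_union]
        exact Finset.mem_filter.2 ⟨Finset.mem_powerset.2 (Finset.singleton_subset_iff.2 hx),
          Finset.mem_singleton_self x⟩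
      · rw [Finset.mem_product]
        constructor
        · exact mem_cycFinset.2 (Or.inr ⟨hc1, by rw [hc1, support_one, Finset.empty_union]⟩)
        · rw [hc1, inv_one, one_mul]
          refine mem_tauFinset.2 fun y hy => Finset.mem_sdiff.2 ⟨hsS hy, ?_⟩
          simp only [hc1, support_one, Finset.empty_union, Finset.mem_singleton]
          rintro rfl
          exact (mem_support.1 hy) hxσ
    · have hxs : x ∈ σ.support := mem_support.2 hxσ
      have hcyc : (σ.cycleOf x).IsCycle := isCycle_cycleOf σ hxσ
      have hxc : x ∈ (σ.cycleOf x).support :=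
        mem_support_cycleOf_iff.2 ⟨Equiv.Perm.SameCycle.refl _ _, hxs⟩
      have hcle : (σ.cycleOf x).support ⊆ σ.support := support_cycleOf_le σ x
      have hun : (σ.cycleOf x).support ∪ {x} = (σ.cycleOf x).support :=
        Finset.union_eq_left.2 (Finset.singleton_subset_iff.2 hxc)
      have hmemf : σ.cycleOf x ∈ σ.cycleFactorsFinset :=
        cycleOf_mem_cycleFactorsFinset_iff.2 hxs
      have hdisj : (σ * (σ.cycleOf x)⁻¹).Disjoint (σ.cycleOf x) :=
        disjoint_mul_inv_of_mem_cycleFactorsFinset hmemf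
      have heq : (σ.cycleOf x)⁻¹ * σ = σ * (σ.cycleOf x)⁻¹ := by
        have h2 : σ.cycleOf x * (σ * (σ.cycleOf x)⁻¹) = σ := by
          rw [← hdisj.commute.eq]
          group
        calc (σ.cycleOf x)⁻¹ * σ
            = (σ.cycleOf x)⁻¹ * (σ.cycleOf x * (σ * (σ.cycleOf x)⁻¹)) := by rw [h2]
          _ = σ * (σ.cycleOf x)⁻¹ := by group
      have hτsup : ((σ.cycleOf x)⁻¹ * σ).support ⊆ σ.support \ (σ.cycleOf x).support := by
        rw [heq]
        intro y hy
        have hyc : y ∉ (σ.cycleOf x).support :=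
          Finset.disjoint_left.1 hdisj.disjoint_support hy
        have hyσ : y ∈ σ.support := by
          rcases Finset.mem_union.1 (support_mul_le σ (σ.cycleOf x)⁻¹ hy) with h | h
          · exact h
          · rw [support_inv] at h; exact absurd h hyc
        exact Finset.mem_sdiff.2 ⟨hyσ, hyc⟩
      rw [Finset.mem_sigma]
      constructor
      · rw [hun]
        exact Finset.mem_filter.2 ⟨Finset.mem_powerset.2 (hcle.trans hsS), hxc⟩
      · rw [Finset.mem_product]
        constructor
        · exact mem_cycFinset.2 (Or.inl ⟨hcyc, hun.symm ▸ rfl⟩)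
        · refine mem_tauFinset.2 fun y hy => ?_
          have := hτsup hy
          rw [hun]
          exact Finset.mem_sdiff.2 ⟨hsS (Finset.mem_sdiff.1 this).1, (Finset.mem_sdiff.1 this).2⟩
  -- left inverse : j (i q) = q
  · rintro ⟨T, c, τ⟩ hq
    obtain ⟨hT, hp⟩ := Finset.mem_sigma.1 hq
    obtain ⟨hc', hτ'⟩ := Finset.mem_product.1 hp
    have hxT : x ∈ T := (Finset.mem_filter.1 hT).2
    have hc := mem_cycFinset.1 hc'
    have hτU : τ.support ⊆ S \ T := mem_tauFinset.1 hτ'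
    have hcT : c.support ⊆ T := support_subset_of_mem_cycFinset hc
    have hτx : τ x = x := by
      by_contra h
      exact (Finset.mem_sdiff.1 (hτU (mem_support.2 h))).2 hxT
    have hdisj : c.Disjoint τ := disjoint_iff_disjoint_support.2
      (Finset.disjoint_left.2 fun y hyc hyτ =>
        (Finset.mem_sdiff.1 (hτU hyτ)).2 (hcT hyc))
    rcases hc with ⟨hcyc, hcs⟩ | ⟨rfl, rfl⟩
    · have hcx : c x ≠ x := mem_support.1 (by rw [hcs]; exact hxT)
      have h1 : (c * τ).cycleOf x = c := by
        rw [cycleOf_mul_of_apply_right_eq_self hdisj.commute x hτx, hcyc.cycleOf_eq hcx]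
      have h2 : c.support ∪ {x} = T := by
        rw [hcs]; exact Finset.union_eq_left.2 (Finset.singleton_subset_iff.2 hxT)
      simp [h1, h2]
    · have h1 : τ.cycleOf x = 1 := (cycleOf_eq_one_iff τ).2 hτx
      simp [h1, hτx]
  -- right inverse : i (j σ) = σ
  · intro σ _
    exact mul_inv_cancel_left _ _
  -- values
  · rintro ⟨T, c, τ⟩ hq
    obtain ⟨hT, hp⟩ := Finset.mem_sigma.1 hq
    obtain ⟨hc', hτ'⟩ := Finset.mem_product.1 hp
    have hTS : T ⊆ S := Finset.mem_powerset.1 (Finset.mem_filter.1 hT).1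
    have hc := mem_cycFinset.1 hc'
    have hτU : τ.support ⊆ S \ T := mem_tauFinset.1 hτ'
    have hcT : c.support ⊆ T := support_subset_of_mem_cycFinset hc
    have hsplit : ∏ i ∈ S, A i ((c * τ) i)
        = (∏ i ∈ S \ T, A i ((c * τ) i)) * ∏ i ∈ T, A i ((c * τ) i) :=
      (Finset.prod_sdiff hTS).symm
    have hTprod : ∀ i ∈ T, A i ((c * τ) i) = A i (c i) := by
      intro i hi
      have hτi : τ i = i := by
        by_contra h
        exact (Finset.mem_sdiff.1 (hτU (mem_support.2 h))).2 hi
      rw [Perm.mul_apply, hτi]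
    have hSTprod : ∀ i ∈ S \ T, A i ((c * τ) i) = A i (τ i) := by
      intro i hi
      have hτiT : τ i ∉ T := by
        by_cases hiτ : i ∈ τ.support
        · exact fun hmem => (Finset.mem_sdiff.1 (hτU (apply_mem_support.2 hiτ))).2 hmem
        · rw [notMem_support.1 hiτ]; exact (Finset.mem_sdiff.1 hi).2
      have : c (τ i) = τ i := notMem_support.1 fun hmem => hτiT (hcT hmem)
      rw [Perm.mul_apply, this]
    have hsgn : ((Perm.sign (c * τ) : ℤ) : F)
        = ((Perm.sign c : ℤ) : F) * ((Perm.sign τ : ℤ) : F) := by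
      rw [_root_.map_mul]; push_cast; ring
    show termG A S T (c, τ) = _
    rw [termG, hsplit, Finset.prod_congr rfl hTprod, Finset.prod_congr rfl hSTprod, hsgn]
    ring


end PMEAux

theorem pme_iff_hamCycleSum_eq {n : ℕ} {F : Type*} [Field F]
    (A B : Matrix (Fin n) (Fin n) F) :
    PrincipalMinorEquiv A B ↔ ∀ S : Finset (Fin n), hamCycleSum A S = hamCycleSum B S := by
  classical
  constructor
  · intro h
    have hperm : ∀ S : Finset (Fin n), PMEAux.permSum A S = PMEAux.permSum B S := fun S => by
      rw [← PMEAux.det_eq_permSum, ← PMEAux.det_eq_permSum, h S]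
    have key : ∀ S : Finset (Fin n), PMEAux.cycSum A S = PMEAux.cycSum B S := by
      intro S
      induction S using Finset.strongInductionOn with
      | _ S ih =>
        rcases S.eq_empty_or_nonempty with rfl | ⟨x, hx⟩
        · simp [PMEAux.cycSum]
        · have hA := PMEAux.permSum_decomp A hx
          have hB := PMEAux.permSum_decomp B hx
          have hsum : ∑ T ∈ S.powerset.filter (fun T => x ∈ T),
              (-1 : F) ^ (T.card - 1) * PMEAux.cycSum A T * PMEAux.permSum A (S \ T)
              = ∑ T ∈ S.powerset.filter (fun T => x ∈ T),
              (-1 : F) ^ (T.card - 1) * PMEAux.cycSum B T * PMEAux.permSum B (S \ T) := by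
            rw [← hA, ← hB, hperm]
          have hS : S ∈ S.powerset.filter (fun T => x ∈ T) :=
            Finset.mem_filter.2 ⟨Finset.mem_powerset.2 (Finset.Subset.refl S), hx⟩
          rw [← Finset.sum_erase_add _ _ hS, ← Finset.sum_erase_add _ _ hS] at hsum
          have herase : ∑ T ∈ (S.powerset.filter (fun T => x ∈ T)).erase S,
              (-1 : F) ^ (T.card - 1) * PMEAux.cycSum A T * PMEAux.permSum A (S \ T)
              = ∑ T ∈ (S.powerset.filter (fun T => x ∈ T)).erase S,
              (-1 : F) ^ (T.card - 1) * PMEAux.cycSum B T * PMEAux.permSum B (S \ T) := by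
            refine Finset.sum_congr rfl fun T hT => ?_
            have hTne : T ≠ S := Finset.ne_of_mem_erase hT
            have hTS : T ⊆ S := Finset.mem_powerset.1
              (Finset.mem_filter.1 (Finset.mem_of_mem_erase hT)).1
            rw [ih T (Finset.ssubset_iff_subset_ne.2 ⟨hTS, hTne⟩), hperm]
          rw [herase] at hsum
          have hfin : (-1 : F) ^ (S.card - 1) * PMEAux.cycSum A S * PMEAux.permSum A (S \ S)
              = (-1 : F) ^ (S.card - 1) * PMEAux.cycSum B S * PMEAux.permSum B (S \ S) :=
            add_left_cancel hsum
          rw [Finset.sdiff_self, PMEAux.permSum_empty, PMEAux.permSum_empty,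
            mul_one, mul_one] at hfin
          exact mul_left_cancel₀ (pow_ne_zero _ (neg_ne_zero.2 one_ne_zero)) hfin
    intro S
    rw [PMEAux.hamCycleSum_eq_cycSum, PMEAux.hamCycleSum_eq_cycSum, key]
  · intro h
    have hcyc : ∀ S : Finset (Fin n), PMEAux.cycSum A S = PMEAux.cycSum B S := fun S => by
      rw [← PMEAux.hamCycleSum_eq_cycSum, ← PMEAux.hamCycleSum_eq_cycSum, h]
    have hperm : ∀ S : Finset (Fin n), PMEAux.permSum A S = PMEAux.permSum B S := by
      intro S
      induction S using Finset.strongInductionOn with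
      | _ S ih =>
        rcases S.eq_empty_or_nonempty with rfl | ⟨x, hx⟩
        · rw [PMEAux.permSum_empty, PMEAux.permSum_empty]
        · rw [PMEAux.permSum_decomp A hx, PMEAux.permSum_decomp B hx]
          refine Finset.sum_congr rfl fun T hT => ?_
          obtain ⟨hTp, hxT⟩ := Finset.mem_filter.1 hT
          have hss : S \ T ⊂ S := Finset.sdiff_ssubset (Finset.mem_powerset.1 hTp) ⟨x, hxT⟩
          rw [hcyc, ih _ hss]
    intro S
    rw [PMEAux.det_eq_permSum, PMEAux.det_eq_permSum, hperm]
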